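/- Suppose E = 0 (so ℰ = 0) and 𝒜 ∈ ℝ^{(n+k)×(n+k)} is invertible (with l+p = n+k), and that 𝒫ᵀ[[0,L₁],[0,L₂]] = 𝒦H, so 𝒫ᵀ𝒜 = 𝒫ᵀÂ + 𝒦H. Then the restricted matrix inequality 𝒬 <_{ker[𝒜,ℬ]} 0 holds if and only if δ((ℱ𝒜^{−1}ℬ)ᵀ(ℱ𝒜^{−1}ℬ) − Λ_{q_L}) − (𝒜^{−1}ℬ)ᵀΘ̂ − Θ̂ᵀ𝒜^{−1}ℬ − μ(𝒜^{−1}ℬ)ᵀ𝒥(𝒜^{−1}ℬ) < 0 (negative definite on ℝ^{q_L+q_M}). -/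

import Mathlib

open Matrix Set Filter

/-- Euclidean norm of a vector in `ℝ^ι`. -/
noncomputable def enorm {ι : Type*} [Fintype ι] (x : ι → ℝ) : ℝ :=
  Real.sqrt (x ⬝ᵥ x)

/-- Spectral (Euclidean operator) norm of a real matrix. -/
noncomputable def matNorm {ι κ : Type*} [Fintype ι] [Fintype κ] [DecidableEq κ]
    (M : Matrix ι κ ℝ) : ℝ :=
  ‖LinearMap.toContinuousLinearMap (Matrix.toEuclideanLin M)‖

/-- Largest eigenvalue of a (symmetric) real matrix, as the supremum of its eigenvalues. -/
noncomputable def lamMax {q : Type*} [Fintype q] (M : Matrix q q ℝ) : ℝ :=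
  sSup {r : ℝ | ∃ v : q → ℝ, v ≠ 0 ∧ M *ᵥ v = r • v}

/-- The first Wong sequence `V^i` of the matrix pencil `sE - A`. -/
def wongV {L N : Type*} [Fintype N] (E A : Matrix L N ℝ) : ℕ → Set (N → ℝ)
  | 0 => Set.univ
  | i + 1 => {x | A *ᵥ x ∈ (fun v => E *ᵥ v) '' wongV E A i}

/-- The first Wong limit `V* = ⋂ V^i` of the matrix pencil `sE - A`. -/
def wongVstar {L N : Type*} [Fintype N] (E A : Matrix L N ℝ) : Set (N → ℝ) :=
  ⋂ i, wongV E A i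

/-- The second Wong sequence `W^i` of the matrix pencil `sE - A`. -/
def wongW {L N : Type*} [Fintype N] (E A : Matrix L N ℝ) : ℕ → Set (N → ℝ)
  | 0 => {0}
  | i + 1 => {x | E *ᵥ x ∈ (fun v => A *ᵥ v) '' wongW E A i}

/-- The second Wong limit `W* = ⋃ W^i` of the matrix pencil `sE - A`. -/
def wongWstar {L N : Type*} [Fintype N] (E A : Matrix L N ℝ) : Set (N → ℝ) :=
  ⋃ i, wongW E A i

/-- `M <_V 0` : the quadratic form of `M` is negative on `V \ {0}`. -/
def NegDefOn {ι : Type*} [Fintype ι] (M : Matrix ι ι ℝ) (V : Set (ι → ℝ)) : Prop :=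
  ∀ v ∈ V, v ≠ 0 → v ⬝ᵥ (M *ᵥ v) < 0

/-- `M >_V 0` : the quadratic form of `M` is positive on `V \ {0}`. -/
def PosDefOn {ι : Type*} [Fintype ι] (M : Matrix ι ι ℝ) (V : Set (ι → ℝ)) : Prop :=
  ∀ v ∈ V, v ≠ 0 → 0 < v ⬝ᵥ (M *ᵥ v)

/-- `M ≥_V 0` : the quadratic form of `M` is nonnegative on `V`. -/
def PosSemidefOn {ι : Type*} [Fintype ι] (M : Matrix ι ι ℝ) (V : Set (ι → ℝ)) : Prop :=
  ∀ v ∈ V, 0 ≤ v ⬝ᵥ (M *ᵥ v)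

/-- In the purely algebraic case `E = 0` with `𝒜` invertible, the restricted matrix
inequality `𝒬 <_{ker[𝒜,ℬ]} 0` is equivalent to negative definiteness (on `ℝ^{q_L+q_M}`)
of the reduced matrix
`δ((ℱ𝒜⁻¹ℬ)ᵀ(ℱ𝒜⁻¹ℬ) - Λ) - (𝒜⁻¹ℬ)ᵀΘ̂ - Θ̂ᵀ𝒜⁻¹ℬ - μ(𝒜⁻¹ℬ)ᵀ𝒥(𝒜⁻¹ℬ)`. -/
theorem restricted_LMI_iff_reduced_negdef {n k l p qL qM j : ℕ}
    (E A : Matrix (Fin l) (Fin n) ℝ) (C : Matrix (Fin p) (Fin n) ℝ)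
    (BL : Matrix (Fin l) (Fin qL) ℝ) (BM : Matrix (Fin l) (Fin qM) ℝ)
    (L₁ : Matrix (Fin l) (Fin k) ℝ) (L₂ : Matrix (Fin p) (Fin k) ℝ)
    (F : Matrix (Fin j) (Fin n) ℝ) (J : Matrix (Fin qM) (Fin n) ℝ)
    (Θ : Matrix (Fin qM) (Fin qM) ℝ) (μ δ : ℝ) (hδ : 0 < δ)
    (P : Matrix (Fin l ⊕ Fin p) (Fin n ⊕ Fin k) ℝ)
    (K : Matrix (Fin n ⊕ Fin k) (Fin n ⊕ Fin k) ℝ)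
    -- E = 0, hence ℰ = 0
    (hE : E = 0)
    -- block matrices
    (calA : Matrix (Fin l ⊕ Fin p) (Fin n ⊕ Fin k) ℝ)
    (hcalA : calA = Matrix.fromBlocks A L₁ C L₂)
    (calB : Matrix (Fin l ⊕ Fin p) (Fin qL ⊕ Fin qM) ℝ)
    (hcalB : calB = Matrix.fromRows (Matrix.fromCols BL BM) 0)
    (hatA : Matrix (Fin l ⊕ Fin p) (Fin n ⊕ Fin k) ℝ)
    (hhatA : hatA = Matrix.fromBlocks A 0 C 0)
    (H : Matrix (Fin n ⊕ Fin k) (Fin n ⊕ Fin k) ℝ)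
    (hH : H = Matrix.fromBlocks 0 0 0 (1 : Matrix (Fin k) (Fin k) ℝ))
    (calF : Matrix (Fin j) (Fin n ⊕ Fin k) ℝ)
    (hcalF : calF = Matrix.fromCols F 0)
    (hatTheta : Matrix (Fin n ⊕ Fin k) (Fin qL ⊕ Fin qM) ℝ)
    (hhatTheta : hatTheta = Matrix.fromBlocks 0 (Jᵀ * Θ) 0 0)
    (calJ : Matrix (Fin n ⊕ Fin k) (Fin n ⊕ Fin k) ℝ)
    (hcalJ : calJ = Matrix.fromBlocks (Jᵀ * J) 0 0 0)
    (Lam : Matrix (Fin qL ⊕ Fin qM) (Fin qL ⊕ Fin qM) ℝ)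
    (hLam : Lam = Matrix.fromBlocks (1 : Matrix (Fin qL) (Fin qL) ℝ) 0 0 0)
    (Q : Matrix ((Fin n ⊕ Fin k) ⊕ (Fin qL ⊕ Fin qM)) ((Fin n ⊕ Fin k) ⊕ (Fin qL ⊕ Fin qM)) ℝ)
    (hQ : Q = Matrix.fromBlocks
      (hatAᵀ * P + Pᵀ * hatA + Hᵀ * Kᵀ + K * H + δ • (calFᵀ * calF) - μ • calJ)
      (Pᵀ * calB + hatTheta)
      (calBᵀ * P + hatThetaᵀ)
      (-(δ • Lam)))
    -- 𝒫ᵀ[[0,L₁],[0,L₂]] = 𝒦H, hence 𝒫ᵀ𝒜 = 𝒫ᵀÂ + 𝒦H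
    (hKH : Pᵀ * Matrix.fromBlocks (0 : Matrix (Fin l) (Fin n) ℝ) L₁ 0 L₂ = K * H)
    -- 𝒜 is invertible (in particular l + p = n + k)
    (Ainv : Matrix (Fin n ⊕ Fin k) (Fin l ⊕ Fin p) ℝ)
    (hAinv : calA * Ainv = 1 ∧ Ainv * calA = 1) :
    NegDefOn Q {v | Matrix.fromCols calA calB *ᵥ v = 0} ↔
    NegDefOn
      (δ • ((calF * Ainv * calB)ᵀ * (calF * Ainv * calB) - Lam)
        - (Ainv * calB)ᵀ * hatTheta - hatThetaᵀ * (Ainv * calB)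
        - μ • ((Ainv * calB)ᵀ * calJ * (Ainv * calB)))
      Set.univ := by
  obtain ⟨hAr, hAl⟩ := hAinv
  set G : Matrix (Fin n ⊕ Fin k) (Fin qL ⊕ Fin qM) ℝ := Ainv * calB with hGdef
  set S : Matrix ((Fin n ⊕ Fin k) ⊕ (Fin qL ⊕ Fin qM)) (Fin qL ⊕ Fin qM) ℝ :=
    Matrix.fromRows (-G) (1 : Matrix (Fin qL ⊕ Fin qM) (Fin qL ⊕ Fin qM) ℝ) with hSdef
  have hAG : calA * G = calB := by
    rw [hGdef, ← Matrix.mul_assoc, hAr, Matrix.one_mul]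
  -- the split of calA
  have hsplit : calA = hatA + Matrix.fromBlocks (0 : Matrix (Fin l) (Fin n) ℝ) L₁ 0 L₂ := by
    rw [hcalA, hhatA, Matrix.fromBlocks_add]
    simp
  have hPA : Pᵀ * calA = Pᵀ * hatA + K * H := by
    rw [hsplit, Matrix.mul_add, hKH]
  have hAP : calAᵀ * P = hatAᵀ * P + Hᵀ * Kᵀ := by
    have := congrArg Matrix.transpose hPA
    simpa [Matrix.transpose_mul, Matrix.transpose_add] using this
  have hQ11 : hatAᵀ * P + Pᵀ * hatA + Hᵀ * Kᵀ + K * H + δ • (calFᵀ * calF) - μ • calJ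
      = calAᵀ * P + Pᵀ * calA + δ • (calFᵀ * calF) - μ • calJ := by
    rw [hAP, hPA]; abel
  have h1 : Gᵀ * (calAᵀ * P) = calBᵀ * P := by
    rw [← Matrix.mul_assoc, ← Matrix.transpose_mul, hAG]
  have h2 : Pᵀ * calA * G = Pᵀ * calB := by
    rw [Matrix.mul_assoc, hAG]
  -- the key matrix identity
  have hSQS : Sᵀ * Q * S =
      δ • ((calF * Ainv * calB)ᵀ * (calF * Ainv * calB) - Lam)
        - (Ainv * calB)ᵀ * hatTheta - hatThetaᵀ * (Ainv * calB)
        - μ • ((Ainv * calB)ᵀ * calJ * (Ainv * calB)) := by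
    rw [hSdef, Matrix.transpose_fromRows, hQ, Matrix.fromCols_mul_fromBlocks,
      Matrix.fromCols_mul_fromRows, hQ11]
    have hFG : calF * Ainv * calB = calF * G := by rw [hGdef, Matrix.mul_assoc]
    rw [hFG, ← hGdef]
    simp only [Matrix.transpose_neg, Matrix.transpose_one, Matrix.neg_mul, Matrix.mul_neg,
      Matrix.one_mul, Matrix.mul_one, Matrix.add_mul, Matrix.mul_add, Matrix.sub_mul,
      Matrix.mul_sub, neg_add, neg_sub, neg_neg, Matrix.smul_mul,
      Matrix.mul_smul, Matrix.transpose_mul, Matrix.transpose_transpose]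
    rw [h1, Matrix.mul_assoc Gᵀ (Pᵀ * calA) G, h2,
      show Gᵀ * calFᵀ * (calF * G) = Gᵀ * (calFᵀ * calF) * G by
        simp only [Matrix.mul_assoc]]
    module
  -- quadratic form transfer
  have quad : ∀ u : (Fin qL ⊕ Fin qM) → ℝ,
      (S *ᵥ u) ⬝ᵥ (Q *ᵥ (S *ᵥ u)) = u ⬝ᵥ ((Sᵀ * Q * S) *ᵥ u) := by
    intro u
    rw [Matrix.mul_assoc, ← Matrix.mulVec_mulVec, Matrix.dotProduct_mulVec u Sᵀ,
      Matrix.vecMul_transpose, Matrix.mulVec_mulVec]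
  -- S *ᵥ u as a Sum.elim
  have hSu : ∀ u : (Fin qL ⊕ Fin qM) → ℝ, S *ᵥ u = Sum.elim (-(G *ᵥ u)) u := by
    intro u
    rw [hSdef, Matrix.fromRows_mulVec, Matrix.neg_mulVec, Matrix.one_mulVec]
  -- membership in the kernel
  have hker : ∀ u : (Fin qL ⊕ Fin qM) → ℝ,
      Matrix.fromCols calA calB *ᵥ (S *ᵥ u) = 0 := by
    intro u
    rw [hSu, Matrix.fromCols_mulVec_sumElim, Matrix.mulVec_neg, Matrix.mulVec_mulVec, hAG]
    simp
  -- every kernel element is of the form S *ᵥ u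
  have hrep : ∀ v : ((Fin n ⊕ Fin k) ⊕ (Fin qL ⊕ Fin qM)) → ℝ,
      Matrix.fromCols calA calB *ᵥ v = 0 → v = S *ᵥ (v ∘ Sum.inr) := by
    intro v hv
    have hveq : v = Sum.elim (v ∘ Sum.inl) (v ∘ Sum.inr) := by
      funext i; cases i <;> rfl
    rw [hveq, Matrix.fromCols_mulVec_sumElim] at hv
    have hx : v ∘ Sum.inl = -(G *ᵥ (v ∘ Sum.inr)) := by
      have := congrArg (fun w => Ainv *ᵥ w) hv
      simp only [Matrix.mulVec_add, Matrix.mulVec_mulVec, hAl, Matrix.one_mulVec,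
        Matrix.mulVec_zero, ← hGdef] at this
      rwa [add_eq_zero_iff_eq_neg] at this
    rw [hSu, ← hx]
    exact hveq
  constructor
  · intro hQneg u _ hu
    have hv : S *ᵥ u ≠ 0 := by
      intro h0
      apply hu
      funext i
      have := congrFun h0 (Sum.inr i)
      rw [hSu] at this
      simpa using this
    have := hQneg (S *ᵥ u) (hker u) hv
    rwa [quad, hSQS] at this
  · intro hRneg v hv hv0
    have hvrep := hrep v hv
    have hu : (v ∘ Sum.inr) ≠ 0 := by
      intro h0
      apply hv0
      rw [hvrep, h0, Matrix.mulVec_zero]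
    have := hRneg (v ∘ Sum.inr) (Set.mem_univ _) hu
    rw [← hSQS, ← quad, ← hvrep] at this
    exact this
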